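/- Let H be a real inner product space and let u, w ∈ H with ‖u‖ = ‖w‖. Then for every real number δ ≥ 0, ‖u − w‖ ≤ 2‖u − δw‖. -/

import Mathlib

/-- In a real inner product space, if `‖u‖ = ‖w‖` then `‖u − w‖ ≤ 2‖u − δw‖`
for every real `δ ≥ 0`. -/
theorem norm_sub_le_two_mul_norm_sub_smul {H : Type*} [NormedAddCommGroup H]
    [InnerProductSpace ℝ H] (u w : H) (h : ‖u‖ = ‖w‖) (δ : ℝ) (hδ : 0 ≤ δ) :
    ‖u - w‖ ≤ 2 * ‖u - δ • w‖ := by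
  have h1 : ‖u - w‖^2 = ‖u‖^2 - 2 * inner ℝ u w + ‖w‖^2 := by
    rw [@norm_sub_sq_real]
  have h2 : ‖u - δ • w‖^2 = ‖u‖^2 - 2 * (δ * inner ℝ u w) + δ^2 * ‖w‖^2 := by
    rw [@norm_sub_sq_real, real_inner_smul_right, norm_smul]
    rw [Real.norm_eq_abs, abs_of_nonneg hδ, mul_pow]
  have ht : |inner ℝ u w| ≤ ‖u‖ * ‖w‖ := abs_real_inner_le_norm u w
  have ht1 : inner ℝ u w ≤ ‖u‖ * ‖w‖ := (abs_le.mp ht).2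
  have ht2 : -(‖u‖ * ‖w‖) ≤ inner ℝ u w := (abs_le.mp ht).1
  have hs : ‖u‖ * ‖w‖ = ‖u‖^2 := by rw [← h, sq]
  have hw : ‖w‖^2 = ‖u‖^2 := by rw [h]
  rw [hs] at ht1 ht2
  rw [hw] at h1 h2
  have key : ‖u - w‖^2 ≤ (2 * ‖u - δ • w‖)^2 := by
    rcases le_or_gt δ (1/4) with hc | hc
    · nlinarith [mul_nonneg (by linarith : (0:ℝ) ≤ 2 - 8*δ)
        (by nlinarith : (0:ℝ) ≤ inner ℝ u w + ‖u‖^2), sq_nonneg ‖u‖,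
        mul_nonneg (mul_nonneg hδ hδ) (sq_nonneg ‖u‖), mul_nonneg hδ (sq_nonneg ‖u‖)]
    · nlinarith [mul_nonneg (by linarith : (0:ℝ) ≤ 8*δ - 2)
        (by nlinarith : (0:ℝ) ≤ ‖u‖^2 - inner ℝ u w),
        mul_nonneg (sq_nonneg (δ - 1)) (sq_nonneg ‖u‖)]
  have h4 : (0:ℝ) ≤ 2 * ‖u - δ • w‖ := by positivity
  nlinarith [norm_nonneg (u - w), key, h4]
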